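/- Let P(t) = a_n t^n + ... + a_0 be a polynomial with roots α_1,...,α_n, and x ∈ ℝ with |x-α_1| = min_j |x-α_j|. Then |x-α_1| ≤ 2^{n-1} |P(x)|/|P'(α_1)|, provided P'(α_1) ≠ 0. -/

import Mathlib

open Polynomial Finset

theorem closest_root_bound_deriv_at_root
    (n : ℕ) (hn : 1 ≤ n) (a : ℂ) (ha : a ≠ 0) (α : Fin n → ℂ)
    (P : Polynomial ℂ)
    (hP : P = Polynomial.C a * ∏ j : Fin n, (Polynomial.X - Polynomial.C (α j)))
    (x : ℝ)
    (hmin : ∀ j : Fin n, ‖(x : ℂ) - α ⟨0, hn⟩‖ ≤ ‖(x : ℂ) - α j‖)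
    (hP'α : P.derivative.eval (α ⟨0, hn⟩) ≠ 0) :
    ‖(x : ℂ) - α ⟨0, hn⟩‖ ≤
      2 ^ (n - 1) * ‖P.eval (x : ℂ)‖ /
        ‖P.derivative.eval (α ⟨0, hn⟩)‖ := by
  set i0 : Fin n := ⟨0, hn⟩ with hi0
  have hderiv : P.derivative.eval (α i0)
      = a * ∏ j ∈ Finset.univ.erase i0, (α i0 - α j) := by
    subst hP
    rw [← Finset.mul_prod_erase _ _ (Finset.mem_univ i0)]
    rw [Polynomial.derivative_mul, Polynomial.derivative_C, zero_mul, zero_add]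
    rw [Polynomial.derivative_mul, Polynomial.derivative_sub, Polynomial.derivative_X,
      Polynomial.derivative_C, sub_zero, one_mul]
    simp only [Polynomial.eval_mul, Polynomial.eval_add, Polynomial.eval_sub,
      Polynomial.eval_X, Polynomial.eval_C, sub_self, zero_mul, add_zero,
      Polynomial.eval_prod]
  have heval : P.eval (x : ℂ) = a * ((x : ℂ) - α i0) * ∏ j ∈ Finset.univ.erase i0, ((x : ℂ) - α j) := by
    subst hP
    rw [Polynomial.eval_mul, Polynomial.eval_C, Polynomial.eval_prod]
    rw [← Finset.mul_prod_erase _ _ (Finset.mem_univ i0)]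
    simp [mul_assoc]
  have hcard : (Finset.univ.erase i0).card = n - 1 := by
    rw [Finset.card_erase_of_mem (Finset.mem_univ _), Finset.card_univ, Fintype.card_fin]
  have hprod_le : ∏ j ∈ Finset.univ.erase i0, ‖α i0 - α j‖
      ≤ 2 ^ (n - 1) * ∏ j ∈ Finset.univ.erase i0, ‖(x : ℂ) - α j‖ := by
    rw [← hcard, ← Finset.prod_const, ← Finset.prod_mul_distrib]
    apply Finset.prod_le_prod
    · intro j _; positivity
    · intro j _
      calc ‖α i0 - α j‖
          ≤ ‖α i0 - (x:ℂ)‖ + ‖(x:ℂ) - α j‖ := by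
            simpa using norm_sub_le_norm_sub_add_norm_sub (α i0) (x:ℂ) (α j)
        _ ≤ ‖(x:ℂ) - α j‖ + ‖(x:ℂ) - α j‖ := by
            rw [← norm_neg (α i0 - (x:ℂ))]; simp only [neg_sub]
            exact add_le_add_left (hmin j) _
        _ = 2 * ‖(x:ℂ) - α j‖ := by ring
  have hP'pos : 0 < ‖P.derivative.eval (α i0)‖ := by
    simpa using norm_pos_iff.mpr hP'α
  rw [le_div_iff₀ hP'pos]
  set d := ‖(x : ℂ) - α i0‖ with hd
  have h1 : ‖P.derivative.eval (α i0)‖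
      = ‖a‖ * ∏ j ∈ Finset.univ.erase i0, ‖α i0 - α j‖ := by
    rw [hderiv, norm_mul, norm_prod]
  have h2 : ‖P.eval (x : ℂ)‖
      = ‖a‖ * d * ∏ j ∈ Finset.univ.erase i0, ‖(x : ℂ) - α j‖ := by
    rw [heval, norm_mul, norm_mul, norm_prod]
  rw [h1, h2]
  have hapos : 0 < ‖a‖ := norm_pos_iff.mpr ha
  have hdpos : 0 ≤ d := norm_nonneg _
  calc d * (‖a‖ * ∏ j ∈ Finset.univ.erase i0, ‖α i0 - α j‖)
      ≤ d * (‖a‖ * (2 ^ (n-1) * ∏ j ∈ Finset.univ.erase i0, ‖(x:ℂ) - α j‖)) := by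
        apply mul_le_mul_of_nonneg_left _ hdpos
        exact mul_le_mul_of_nonneg_left hprod_le hapos.le
    _ = 2 ^ (n-1) * (‖a‖ * d * ∏ j ∈ Finset.univ.erase i0, ‖(x:ℂ) - α j‖) := by ring
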